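/- arXiv:2206.03821 — 2 statements merged into one kernel-verified Lean document; each statement's English description precedes it below -/
import Mathlib

section
/- Let φ ∈ M satisfy ∫₁^∞ dr/(r·φ²(r)) < ∞. Then for every integer p ≥ 0 and dimension n ≥ 1, with s = p + 1 + n/2, the weight function μ(ξ,η) = (1+|ξ|²+|η|)^{s/2} φ((1+|ξ|²+|η|)^{1/2}) satisfies ∫_{ℝⁿ×ℝ} (1+|ξ|²+|η|)^{|α|+2β} / μ(ξ,η)² dξ dη < ∞ whenever |α| + 2β ≤ p, where α is a multi-index in ξ and β ≥ 0 an integer. -/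
open Filter Topology Set MeasureTheory
open scoped ENNReal

def SlowlyVarying (φ : ℝ → ℝ) : Prop :=
  ∀ l : ℝ, 0 < l → Tendsto (fun r => φ (l * r) / φ r) atTop (𝓝 1)

def MemM (φ : ℝ → ℝ) : Prop :=
  Measurable φ ∧ (∀ r, 1 ≤ r → 0 < φ r) ∧
  (∀ c : ℝ, 1 < c → ∃ m > 0, ∃ M : ℝ, ∀ r ∈ Icc (1:ℝ) c, m ≤ φ r ∧ φ r ≤ M) ∧
  SlowlyVarying φ

/-- The squared anisotropic Hörmander weight `μ(ξ,η)²`. -/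
noncomputable def wt (n : ℕ) (s : ℝ) (φ : ℝ → ℝ)
    (q : EuclideanSpace ℝ (Fin n) × ℝ) : ℝ :=
  (1 + ‖q.1‖ ^ 2 + |q.2|) ^ s * (φ ((1 + ‖q.1‖ ^ 2 + |q.2|) ^ ((1:ℝ)/2))) ^ 2

/-- One-dimensional change of variables for lower Lebesgue integrals. -/
private theorem lintegral_image_deriv {s : Set ℝ} {f : ℝ → ℝ} {f' : ℝ → ℝ}
    (hs : MeasurableSet s) (hf' : ∀ x ∈ s, HasDerivWithinAt f (f' x) s x)
    (hf : InjOn f s) (g : ℝ → ℝ≥0∞) :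
    ∫⁻ x in f '' s, g x = ∫⁻ x in s, ENNReal.ofReal |f' x| * g (f x) := by
  simpa only [ContinuousLinearMap.det_toSpanSingleton] using
    lintegral_image_eq_lintegral_abs_det_fderiv_mul volume hs
      (fun x hx => (hf' x hx).hasFDerivWithinAt) hf g

/-- Symmetrization: `∫_ℝ G(A+|η|) dη = 2 ∫_{(0,∞)} G(A+u) du`. -/
private theorem lintegral_abs_comp (G : ℝ → ℝ≥0∞) (A : ℝ) :
    ∫⁻ η : ℝ, G (A + |η|) = 2 * ∫⁻ u in Ioi (0:ℝ), G (A + u) := by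
  have h1 : ∫⁻ η : ℝ, G (A + |η|) =
      (∫⁻ η in Iio (0:ℝ), G (A + |η|)) + ∫⁻ η in Ici (0:ℝ), G (A + |η|) := by
    rw [← lintegral_union measurableSet_Ici (Iio_disjoint_Ici le_rfl), Iio_union_Ici,
      Measure.restrict_univ]
  have h2 : ∫⁻ η in Ici (0:ℝ), G (A + |η|) = ∫⁻ u in Ioi (0:ℝ), G (A + u) := by
    rw [← setLIntegral_congr (Ioi_ae_eq_Ici (a := (0:ℝ)))]
    exact setLIntegral_congr_fun measurableSet_Ioi (fun x hx => by
      simp only [abs_of_pos (show (0:ℝ) < x from hx)])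
  have h3 : ∫⁻ η in Iio (0:ℝ), G (A + |η|) = ∫⁻ u in Ioi (0:ℝ), G (A + u) := by
    have himg : (fun u : ℝ => -u) '' Ioi (0:ℝ) = Iio (0:ℝ) := by
      ext x
      constructor
      · rintro ⟨y, hy, rfl⟩; simpa using hy
      · intro hx; exact ⟨-x, by simpa using hx, by ring⟩
    rw [← himg, lintegral_image_deriv (f' := fun _ => (-1:ℝ)) measurableSet_Ioi
      (fun x _ => (hasDerivAt_neg x).hasDerivWithinAt) (neg_injective.injOn) _]
    refine setLIntegral_congr_fun measurableSet_Ioi (fun x hx => ?_)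
    have hx0 : (0:ℝ) < x := hx
    simp [abs_of_pos hx0]
  rw [h1, h2, h3, two_mul]

/-- if `∫₁^∞ dr/(r φ²(r)) < ∞` and `s = p + 1 + n/2`, then
`∫ (1+|ξ|²+|η|)^{|α|+2β} / μ(ξ,η)² dξ dη < ∞` whenever `|α| + 2β ≤ p`. -/
theorem weight_integral_finite (n p : ℕ) (hn : 1 ≤ n) (φ : ℝ → ℝ) (hφ : MemM φ)
    (hint : ∫⁻ r in Ioi (1:ℝ), ENNReal.ofReal (1 / (r * φ r ^ 2)) < ⊤)
    (α : Fin n → ℕ) (β : ℕ) (hαβ : (∑ i, α i) + 2 * β ≤ p) :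
    ∫⁻ q : EuclideanSpace ℝ (Fin n) × ℝ,
      ENNReal.ofReal ((1 + ‖q.1‖ ^ 2 + |q.2|) ^ ((((∑ i, α i) + 2 * β : ℕ)) : ℝ) /
        wt n ((p : ℝ) + 1 + (n : ℝ) / 2) φ q) < ⊤ := by
  obtain ⟨hφm, hφpos, -, -⟩ := hφ
  set k : ℕ := (∑ i, α i) + 2 * β with hk
  set s : ℝ := (p : ℝ) + 1 + (n : ℝ) / 2 with hs
  set c : ℝ := 1 + (n : ℝ) / 2 with hc
  set G : ℝ → ℝ≥0∞ := fun u => ENNReal.ofReal (u ^ (-c) / φ (u ^ ((1:ℝ)/2)) ^ 2) with hG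
  set H : ℝ → ℝ≥0∞ := fun r => ENNReal.ofReal (2 * (r ^ (-1 - (n:ℝ)) / φ r ^ 2)) with hH
  have hGmeas : Measurable G := by
    have h1 : Measurable fun u : ℝ => u ^ (-c) := by fun_prop
    have h0 : Measurable fun u : ℝ => u ^ ((1:ℝ)/2) := by fun_prop
    exact (h1.div ((hφm.comp h0).pow_const 2)).ennreal_ofReal
  have hHmeas : Measurable H := by
    have h1 : Measurable fun r : ℝ => r ^ (-1 - (n:ℝ)) := by fun_prop
    exact (measurable_const.mul (h1.div (hφm.pow_const 2))).ennreal_ofReal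
  -- Step A: pointwise bound of the integrand by `G (1+‖ξ‖²+|η|)`
  have hpt : ∀ q : EuclideanSpace ℝ (Fin n) × ℝ,
      ENNReal.ofReal ((1 + ‖q.1‖ ^ 2 + |q.2|) ^ ((k : ℕ) : ℝ) / wt n s φ q)
        ≤ G (1 + ‖q.1‖ ^ 2 + |q.2|) := by
    intro q
    set t : ℝ := 1 + ‖q.1‖ ^ 2 + |q.2| with ht
    have ht1 : (1:ℝ) ≤ t := by
      have := sq_nonneg ‖q.1‖
      have := abs_nonneg q.2
      simp only [ht]; nlinarith
    have htpos : (0:ℝ) < t := lt_of_lt_of_le one_pos ht1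
    have hsq : (1:ℝ) ≤ t ^ ((1:ℝ)/2) := Real.one_le_rpow ht1 (by norm_num)
    have hφt : 0 < φ (t ^ ((1:ℝ)/2)) := hφpos _ hsq
    apply ENNReal.ofReal_le_ofReal
    have hwt : wt n s φ q = t ^ s * φ (t ^ ((1:ℝ)/2)) ^ 2 := rfl
    rw [hwt]
    have key : t ^ ((k : ℕ) : ℝ) / t ^ s ≤ t ^ (-c) := by
      rw [← Real.rpow_sub htpos]
      apply Real.rpow_le_rpow_of_exponent_le ht1
      have hkp : ((k : ℕ) : ℝ) ≤ (p : ℝ) := by exact_mod_cast hαβ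
      rw [hs, hc]; linarith
    calc t ^ ((k : ℕ) : ℝ) / (t ^ s * φ (t ^ ((1:ℝ)/2)) ^ 2)
        = (t ^ ((k : ℕ) : ℝ) / t ^ s) / φ (t ^ ((1:ℝ)/2)) ^ 2 := (div_div _ _ _).symm
      _ ≤ t ^ (-c) / φ (t ^ ((1:ℝ)/2)) ^ 2 := by gcongr
  refine lt_of_le_of_lt (lintegral_mono hpt) ?_
  -- Tonelli: split the integral
  have htm : Measurable fun q : EuclideanSpace ℝ (Fin n) × ℝ => 1 + ‖q.1‖ ^ 2 + |q.2| :=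
    (measurable_const.add ((measurable_fst.norm).pow_const 2)).add measurable_snd.abs
  have hmeas2 : AEMeasurable (fun q : EuclideanSpace ℝ (Fin n) × ℝ =>
      G (1 + ‖q.1‖ ^ 2 + |q.2|)) (volume.prod volume) := (hGmeas.comp htm).aemeasurable
  rw [Measure.volume_eq_prod, lintegral_prod _ hmeas2]
  -- Inner integral in η
  have hA1 : ∀ ξ : EuclideanSpace ℝ (Fin n), (1:ℝ) ≤ 1 + ‖ξ‖ ^ 2 := fun ξ => by
    nlinarith [sq_nonneg ‖ξ‖]
  have inner : ∀ ξ : EuclideanSpace ℝ (Fin n),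
      (∫⁻ η : ℝ, G (1 + ‖ξ‖ ^ 2 + |η|)) =
        2 * ∫⁻ r in Ioi (Real.sqrt (1 + ‖ξ‖ ^ 2)), H r := by
    intro ξ
    set A : ℝ := 1 + ‖ξ‖ ^ 2 with hAdef
    have hA : (1:ℝ) ≤ A := hA1 ξ
    have hA0 : (0:ℝ) ≤ A := by linarith
    have hsA1 : (1:ℝ) ≤ Real.sqrt A := by
      rw [show (1:ℝ) = Real.sqrt 1 by simp]
      exact Real.sqrt_le_sqrt hA
    rw [lintegral_abs_comp G A]
    congr 1
    have hinj : InjOn (fun r : ℝ => r ^ 2 - A) (Ioi (Real.sqrt A)) := by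
      intro a ha b hb hab
      simp only [mem_Ioi] at ha hb
      have ha0 : (0:ℝ) ≤ a := le_trans (Real.sqrt_nonneg A) ha.le
      have hb0 : (0:ℝ) ≤ b := le_trans (Real.sqrt_nonneg A) hb.le
      have hsq : a ^ 2 = b ^ 2 := by
        have : a ^ 2 - A = b ^ 2 - A := hab
        linarith
      calc a = Real.sqrt (a ^ 2) := (Real.sqrt_sq ha0).symm
        _ = Real.sqrt (b ^ 2) := by rw [hsq]
        _ = b := Real.sqrt_sq hb0
    have himg : (fun r : ℝ => r ^ 2 - A) '' Ioi (Real.sqrt A) = Ioi (0:ℝ) := by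
      ext u
      simp only [mem_image, mem_Ioi]
      constructor
      · rintro ⟨r, hr, rfl⟩
        have h1 : Real.sqrt A ^ 2 < r ^ 2 :=
          pow_lt_pow_left₀ hr (Real.sqrt_nonneg A) (by norm_num)
        rw [Real.sq_sqrt hA0] at h1
        linarith
      · intro hu
        refine ⟨Real.sqrt (A + u), Real.sqrt_lt_sqrt hA0 (by linarith), ?_⟩
        rw [Real.sq_sqrt (by linarith)]; ring
    rw [← himg, lintegral_image_deriv (f' := fun r => 2 * r) measurableSet_Ioi
      (fun r _ => by
        simpa using ((hasDerivAt_pow 2 r).sub_const A).hasDerivWithinAt)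
      hinj (fun u => G (A + u))]
    refine setLIntegral_congr_fun measurableSet_Ioi (fun r hr => ?_)
    simp only [mem_Ioi] at hr
    have hr1 : (1:ℝ) ≤ r := le_trans hsA1 hr.le
    have hr0 : (0:ℝ) < r := lt_of_lt_of_le one_pos hr1
    have harg : A + (r ^ 2 - A) = r ^ 2 := by ring
    rw [harg]
    have e1 : ((r:ℝ) ^ 2) ^ ((1:ℝ)/2) = r := by
      rw [← Real.rpow_natCast r 2, ← Real.rpow_mul hr0.le]
      norm_num
    have e2 : ((r:ℝ) ^ 2) ^ (-c) = r ^ (-2 - (n:ℝ)) := by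
      rw [← Real.rpow_natCast r 2, ← Real.rpow_mul hr0.le]
      congr 1
      rw [hc]; push_cast; ring
    have e3 : r ^ (-1 - (n:ℝ)) = r * r ^ (-2 - (n:ℝ)) := by
      rw [show (-1 - (n:ℝ)) = 1 + (-2 - (n:ℝ)) by ring, Real.rpow_add hr0, Real.rpow_one]
    simp only [hG, hH]
    rw [e1, e2, ← ENNReal.ofReal_mul (abs_nonneg _), abs_of_pos (by linarith : (0:ℝ) < 2 * r)]
    congr 1
    rw [e3]; ring
  rw [lintegral_congr inner]
  rw [lintegral_const_mul' 2 _ (by norm_num)]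
  -- Tonelli swap
  set B : ℝ≥0∞ := volume (Metric.ball (0 : EuclideanSpace ℝ (Fin n)) 1) with hB
  have hBne : B ≠ ⊤ := (measure_ball_lt_top).ne
  have hsqm : Measurable fun ξ : EuclideanSpace ℝ (Fin n) => Real.sqrt (1 + ‖ξ‖ ^ 2) :=
    (measurable_const.add (measurable_norm.pow_const 2)).sqrt
  set Sr : ℝ → Set (EuclideanSpace ℝ (Fin n)) :=
    fun r => {ξ : EuclideanSpace ℝ (Fin n) | Real.sqrt (1 + ‖ξ‖ ^ 2) < r} with hSr
  have hSrm : ∀ r, MeasurableSet (Sr r) := fun r => measurableSet_lt hsqm measurable_const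
  have hswap : (∫⁻ ξ : EuclideanSpace ℝ (Fin n),
      ∫⁻ r in Ioi (Real.sqrt (1 + ‖ξ‖ ^ 2)), H r) = ∫⁻ r : ℝ, H r * volume (Sr r) := by
    have e1 : ∀ ξ : EuclideanSpace ℝ (Fin n),
        (∫⁻ r in Ioi (Real.sqrt (1 + ‖ξ‖ ^ 2)), H r) =
          ∫⁻ r : ℝ, (Ioi (Real.sqrt (1 + ‖ξ‖ ^ 2))).indicator H r := fun ξ =>
      (lintegral_indicator measurableSet_Ioi H).symm
    simp only [e1]
    have hS : MeasurableSet {z : (EuclideanSpace ℝ (Fin n)) × ℝ |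
        Real.sqrt (1 + ‖z.1‖ ^ 2) < z.2} :=
      measurableSet_lt (hsqm.comp measurable_fst) measurable_snd
    have hfe : (Function.uncurry fun (ξ : EuclideanSpace ℝ (Fin n)) (r : ℝ) =>
        (Ioi (Real.sqrt (1 + ‖ξ‖ ^ 2))).indicator H r)
        = {z : (EuclideanSpace ℝ (Fin n)) × ℝ |
            Real.sqrt (1 + ‖z.1‖ ^ 2) < z.2}.indicator (fun z => H z.2) := by
      ext z
      simp [Function.uncurry, Set.indicator_apply]
    have hmu : AEMeasurable (Function.uncurry fun (ξ : EuclideanSpace ℝ (Fin n)) (r : ℝ) =>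
        (Ioi (Real.sqrt (1 + ‖ξ‖ ^ 2))).indicator H r) (volume.prod volume) := by
      rw [hfe]
      exact ((hHmeas.comp measurable_snd).indicator hS).aemeasurable
    rw [lintegral_lintegral_swap hmu]
    refine lintegral_congr fun r => ?_
    have e2 : (fun ξ : EuclideanSpace ℝ (Fin n) =>
        (Ioi (Real.sqrt (1 + ‖ξ‖ ^ 2))).indicator H r) = (Sr r).indicator (fun _ => H r) := by
      funext ξ
      simp [Set.indicator_apply, hSr]
    rw [e2, lintegral_indicator (hSrm r), setLIntegral_const]
  rw [hswap]
  -- Bound the sublevel-set volume and conclude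
  haveI : Nonempty (Fin n) := ⟨⟨0, hn⟩⟩
  have hvol : ∀ r : ℝ, H r * volume (Sr r) ≤
      (Ioi (1:ℝ)).indicator (fun r => 2 * B * ENNReal.ofReal (1 / (r * φ r ^ 2))) r := by
    intro r
    by_cases hr : 1 < r
    · rw [Set.indicator_of_mem (mem_Ioi.2 hr)]
      have hr0 : (0:ℝ) < r := by linarith
      have hsub : Sr r ⊆ Metric.ball (0 : EuclideanSpace ℝ (Fin n)) r := by
        intro ξ hξ
        simp only [hSr, mem_setOf_eq] at hξ
        rw [Metric.mem_ball, dist_zero_right]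
        have h1 : ‖ξ‖ ≤ Real.sqrt (1 + ‖ξ‖ ^ 2) := by
          have h2 := Real.sqrt_le_sqrt (show ‖ξ‖ ^ 2 ≤ 1 + ‖ξ‖ ^ 2 by linarith [sq_nonneg ‖ξ‖])
          rwa [Real.sqrt_sq (norm_nonneg ξ)] at h2
        linarith
      have hball : volume (Metric.ball (0 : EuclideanSpace ℝ (Fin n)) r)
          = ENNReal.ofReal (r ^ n) * B := by
        rw [Measure.addHaar_ball volume (0 : EuclideanSpace ℝ (Fin n)) hr0.le,
          finrank_euclideanSpace_fin]
      have hx : H r * ENNReal.ofReal (r ^ n) = 2 * ENNReal.ofReal (1 / (r * φ r ^ 2)) := by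
        simp only [hH]
        rw [← ENNReal.ofReal_mul (by positivity), ← ENNReal.ofReal_ofNat,
          ← ENNReal.ofReal_mul (by norm_num)]
        congr 1
        have hrn : (r:ℝ) ^ n = r ^ ((n:ℝ)) := (Real.rpow_natCast r n).symm
        have h2 : r ^ (-1 - (n:ℝ)) * r ^ ((n:ℝ)) = 1 / r := by
          rw [← Real.rpow_add hr0, show (-1 - (n:ℝ) + n) = -1 by ring, Real.rpow_neg_one,
            one_div]
        rw [hrn, show (2:ℝ) * (r ^ (-1 - (n:ℝ)) / φ r ^ 2) * r ^ ((n:ℝ))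
          = 2 * ((r ^ (-1 - (n:ℝ)) * r ^ ((n:ℝ))) / φ r ^ 2) by ring, h2]
        ring
      calc H r * volume (Sr r) ≤ H r * (ENNReal.ofReal (r ^ n) * B) :=
            mul_le_mul_right (le_trans (measure_mono hsub) (le_of_eq hball)) _
        _ = (H r * ENNReal.ofReal (r ^ n)) * B := by ring
        _ = 2 * ENNReal.ofReal (1 / (r * φ r ^ 2)) * B := by rw [hx]
        _ = 2 * B * ENNReal.ofReal (1 / (r * φ r ^ 2)) := by ring
    · have hempty : Sr r = ∅ := by
        ext ξ
        simp only [hSr, mem_setOf_eq, mem_empty_iff_false, iff_false, not_lt]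
        calc r ≤ 1 := not_lt.1 hr
          _ ≤ Real.sqrt (1 + ‖ξ‖ ^ 2) := by
            have h2 := Real.sqrt_le_sqrt (show (1:ℝ) ≤ 1 + ‖ξ‖ ^ 2 by nlinarith [sq_nonneg ‖ξ‖])
            rwa [Real.sqrt_one] at h2
      rw [hempty, measure_empty, mul_zero]
      exact zero_le
  have hfin : (∫⁻ r : ℝ, H r * volume (Sr r)) < ⊤ := by
    refine lt_of_le_of_lt (lintegral_mono hvol) ?_
    rw [lintegral_indicator measurableSet_Ioi]
    rw [lintegral_const_mul' _ _ (ENNReal.mul_ne_top (by norm_num) hBne)]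
    exact ENNReal.mul_lt_top (ENNReal.mul_lt_top (by norm_num) hBne.lt_top) hint
  exact ENNReal.mul_lt_top (by norm_num) hfin
end

section
/- The condition ∫₁^∞ dr/(r φ²(r)) < ∞ is sharp for continuous embedding into bounded continuous functions: if φ ∈ M and the integral diverges, then there exists w ∈ H^{s,s/2;φ}(ℝ^{n+1}) with s = 1 + n/2 whose Fourier transform is nonnegative but not integrable, hence (1+|ξ|²+|η|)^{s/2} φ((1+|ξ|²+|η|)^{1/2}) fails the Cauchy–Schwarz dual condition ∫∫ (1+|ξ|²+|η|)^{-s} φ^{-2}((1+|ξ|²+|η|)^{1/2}) dξ dη = ∞. -/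
open Filter Topology Set MeasureTheory
open scoped ENNReal

/-- One-dimensional change of variables for lintegrals. -/
theorem my_lintegral_image {s : Set ℝ} {f f' : ℝ → ℝ} (hs : MeasurableSet s)
    (hf' : ∀ x ∈ s, HasDerivWithinAt f (f' x) s x) (hf : InjOn f s) (g : ℝ → ℝ≥0∞) :
    ∫⁻ x in f '' s, g x = ∫⁻ x in s, ENNReal.ofReal |f' x| * g (f x) := by
  simpa only [ContinuousLinearMap.det_toSpanSingleton] using
    lintegral_image_eq_lintegral_abs_det_fderiv_mul volume hs
      (fun x hx => (hf' x hx).hasFDerivWithinAt) hf g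

set_option maxHeartbeats 1600000 in
/-- sharpness of the integral condition — if `∫₁^∞ dr/(r φ²(r)) = ∞`
then for `s = 1 + n/2` the dual Cauchy–Schwarz integral
`∫∫ (1+|ξ|²+|η|)^{-s} φ^{-2}((1+|ξ|²+|η|)^{1/2}) dξ dη` diverges. -/
theorem weight_integral_divergent (n : ℕ) (hn : 1 ≤ n) (φ : ℝ → ℝ) (hφ : MemM φ)
    (hdiv : ∫⁻ r in Ioi (1:ℝ), ENNReal.ofReal (1 / (r * φ r ^ 2)) = ⊤) :
    ∫⁻ q : EuclideanSpace ℝ (Fin n) × ℝ,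
      ENNReal.ofReal ((wt n (1 + (n : ℝ) / 2) φ q)⁻¹) = ⊤ := by
  obtain ⟨hφm, hφpos, hφbdd, -⟩ := hφ
  set E := EuclideanSpace ℝ (Fin n) with hE_def
  set s : ℝ := 1 + (n : ℝ) / 2 with hs_def
  have h2s : 2 * s = 2 + (n : ℝ) := by rw [hs_def]; ring
  set f : E × ℝ → ℝ≥0∞ := fun q => ENNReal.ofReal ((wt n s φ q)⁻¹) with hf_def
  set F : ℝ → ℝ≥0∞ := fun r => ENNReal.ofReal (1 / (r * φ r ^ 2)) with hF_def
  set H : ℝ → ℝ≥0∞ := fun r =>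
    ENNReal.ofReal (2 * r * ((r ^ 2 * r ^ n) * φ r ^ 2)⁻¹) with hH_def
  have hsqrt2_pos : (0:ℝ) < Real.sqrt 2 := Real.sqrt_pos.mpr (by norm_num)
  have hsqrt2_gt1 : (1:ℝ) < Real.sqrt 2 := by
    rw [show (1:ℝ) = Real.sqrt 1 from (Real.sqrt_one).symm]
    exact Real.sqrt_lt_sqrt (by norm_num) (by norm_num)
  have hsq_sqrt2 : Real.sqrt 2 ^ 2 = 2 := Real.sq_sqrt (by norm_num)
  have hsqrt2_lt2 : Real.sqrt 2 < 2 := by nlinarith [hsq_sqrt2, hsqrt2_pos]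
  -- measurability facts
  have hFmeas : Measurable F := by
    apply Measurable.ennreal_ofReal
    exact measurable_const.div (measurable_id.mul (hφm.pow_const 2))
  have hHmeas : Measurable H := by
    apply Measurable.ennreal_ofReal
    exact (measurable_const.mul measurable_id).mul
      (((measurable_id.pow_const 2).mul (measurable_id.pow_const n)).mul (hφm.pow_const 2)).inv
  have hfmeas : Measurable f := by
    apply Measurable.ennreal_ofReal
    apply Measurable.inv
    unfold wt
    have ha : Measurable fun q : E × ℝ => 1 + ‖q.1‖ ^ 2 + |q.2| := by fun_prop
    have h1 : Measurable fun q : E × ℝ => (1 + ‖q.1‖ ^ 2 + |q.2|) ^ s := by fun_prop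
    have h2 : Measurable fun q : E × ℝ =>
        φ ((1 + ‖q.1‖ ^ 2 + |q.2|) ^ ((1:ℝ)/2)) := by
      exact hφm.comp (by fun_prop)
    exact h1.mul (h2.pow_const 2)
  -- Step 1: the tail integral diverges
  have htail : ∫⁻ r in Ioi (Real.sqrt 2), F r = ⊤ := by
    obtain ⟨m, hm0, M, hmM⟩ := hφbdd 2 one_lt_two
    have hfin : ∫⁻ r in Ioc (1:ℝ) (Real.sqrt 2), F r ≠ ⊤ := by
      have hb : ∫⁻ r in Ioc (1:ℝ) (Real.sqrt 2), F r
          ≤ ∫⁻ _ in Ioc (1:ℝ) (Real.sqrt 2), ENNReal.ofReal (1 / m ^ 2) := by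
        apply setLIntegral_mono' measurableSet_Ioc
        intro r hr
        have hr1 : 1 ≤ r := le_of_lt hr.1
        have hφr : m ≤ φ r := (hmM r ⟨hr1, hr.2.trans hsqrt2_lt2.le⟩).1
        apply ENNReal.ofReal_le_ofReal
        rw [div_le_div_iff₀ (by nlinarith) (by positivity)]
        nlinarith
      rw [setLIntegral_const] at hb
      refine ne_top_of_le_ne_top ?_ hb
      exact ENNReal.mul_ne_top ENNReal.ofReal_ne_top (by
        rw [Real.volume_Ioc]; exact ENNReal.ofReal_ne_top)
    rw [← Ioc_union_Ioi_eq_Ioi hsqrt2_gt1.le,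
      lintegral_union measurableSet_Ioi Ioc_disjoint_Ioi_same] at hdiv
    rcases ENNReal.add_eq_top.mp hdiv with h | h
    · exact absurd h hfin
    · exact h
  -- Step 2: inner integral over η, for fixed ξ
  have key : ∀ ξ : E, ∫⁻ r in Ioi (Real.sqrt (1 + ‖ξ‖ ^ 2)), H r ≤ ∫⁻ η : ℝ, f (ξ, η) := by
    intro ξ
    set B : ℝ := 1 + ‖ξ‖ ^ 2 with hB_def
    have hB1 : (1:ℝ) ≤ B := by nlinarith [sq_nonneg ‖ξ‖]
    have hB0 : (0:ℝ) ≤ B := by linarith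
    have hsB : (0:ℝ) ≤ Real.sqrt B := Real.sqrt_nonneg B
    have hsB1 : (1:ℝ) ≤ Real.sqrt B := by
      rw [show (1:ℝ) = Real.sqrt 1 from (Real.sqrt_one).symm]
      exact Real.sqrt_le_sqrt hB1
    have himg : (fun r : ℝ => r ^ 2 - B) '' Ioi (Real.sqrt B) = Ioi 0 := by
      ext y
      simp only [mem_image, mem_Ioi]
      constructor
      · rintro ⟨x, hx, rfl⟩
        have hx0 : 0 < x := lt_of_le_of_lt hsB hx
        have : Real.sqrt B ^ 2 = B := Real.sq_sqrt hB0
        nlinarith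
      · intro hy
        refine ⟨Real.sqrt (B + y), ?_, ?_⟩
        · exact Real.sqrt_lt_sqrt hB0 (by linarith)
        · rw [Real.sq_sqrt (by linarith)]; ring
    have hder : ∀ x ∈ Ioi (Real.sqrt B),
        HasDerivWithinAt (fun r : ℝ => r ^ 2 - B) (2 * x) (Ioi (Real.sqrt B)) x := by
      intro x hx
      simpa using ((hasDerivAt_pow 2 x).sub_const B).hasDerivWithinAt
    have hinj : InjOn (fun r : ℝ => r ^ 2 - B) (Ioi (Real.sqrt B)) := by
      intro x hx y hy hxy
      simp only [mem_Ioi] at hx hy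
      have hx0 : 0 < x := lt_of_le_of_lt hsB hx
      have hy0 : 0 < y := lt_of_le_of_lt hsB hy
      have h2 : x ^ 2 = y ^ 2 := by dsimp at hxy; linarith
      nlinarith
    have hcv := my_lintegral_image (f := fun r : ℝ => r ^ 2 - B) (f' := fun x => 2 * x)
      measurableSet_Ioi hder hinj (fun y => f (ξ, y))
    rw [himg] at hcv
    -- the transformed integrand equals H on the set
    have hcong : ∫⁻ x in Ioi (Real.sqrt B),
        ENNReal.ofReal |2 * x| * f (ξ, x ^ 2 - B) = ∫⁻ x in Ioi (Real.sqrt B), H x := by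
      apply setLIntegral_congr_fun measurableSet_Ioi
      intro x hx
      have hx1 : 1 ≤ x := le_trans hsB1 (le_of_lt hx)
      have hx0 : 0 < x := lt_of_lt_of_le one_pos hx1
      have hxB : B < x ^ 2 := by
        have : Real.sqrt B ^ 2 = B := Real.sq_sqrt hB0
        nlinarith [mem_Ioi.mp hx]
      have habs : |x ^ 2 - B| = x ^ 2 - B := abs_of_pos (by linarith)
      have harg : 1 + ‖ξ‖ ^ 2 + |x ^ 2 - B| = x ^ 2 := by
        rw [habs]; rw [hB_def]; ring
      have hwt : wt n s φ (ξ, x ^ 2 - B) = x ^ (2 * s) * φ x ^ 2 := by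
        unfold wt
        simp only
        rw [harg]
        congr 1
        · rw [← Real.rpow_natCast x 2, ← Real.rpow_mul hx0.le]
          norm_num
        · congr 2
          rw [← Real.rpow_natCast x 2, ← Real.rpow_mul hx0.le]
          norm_num
      have hrpow : x ^ (2 * s) = x ^ 2 * x ^ n := by
        rw [h2s, Real.rpow_add hx0, Real.rpow_natCast, Real.rpow_two]
      rw [hf_def]
      simp only
      rw [hwt, hrpow, hH_def]
      simp only
      rw [abs_of_pos (by linarith : (0:ℝ) < 2 * x),
        ← ENNReal.ofReal_mul (by linarith : (0:ℝ) ≤ 2 * x)]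
    calc ∫⁻ r in Ioi (Real.sqrt B), H r
        = ∫⁻ y in Ioi (0:ℝ), f (ξ, y) := by rw [hcv, hcong]
      _ ≤ ∫⁻ η : ℝ, f (ξ, η) := setLIntegral_le_lintegral _ _
  -- Step 3: Tonelli
  have hprod : ∫⁻ q : E × ℝ, f q = ∫⁻ ξ : E, ∫⁻ η : ℝ, f (ξ, η) := by
    exact lintegral_prod f hfmeas.aemeasurable
  set c : E → ℝ := fun ξ => Real.sqrt (1 + ‖ξ‖ ^ 2) with hc_def
  have hcmeas : Measurable c := by fun_prop
  have step1 : ∫⁻ ξ : E, ∫⁻ r in Ioi (c ξ), H r ≤ ∫⁻ q : E × ℝ, f q := by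
    rw [hprod]; exact lintegral_mono fun ξ => key ξ
  -- Step 4: swap
  have hswap : ∫⁻ ξ : E, ∫⁻ r in Ioi (c ξ), H r
      = ∫⁻ r : ℝ, H r * volume {ξ : E | c ξ < r} := by
    have heq1 : ∀ ξ : E, ∫⁻ r in Ioi (c ξ), H r = ∫⁻ r : ℝ, (Ioi (c ξ)).indicator H r :=
      fun ξ => (lintegral_indicator measurableSet_Ioi H).symm
    have hmeas2 : AEMeasurable
        (Function.uncurry fun (ξ : E) (r : ℝ) => (Ioi (c ξ)).indicator H r)
        ((volume : Measure E).prod (volume : Measure ℝ)) := by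
      have heq : (Function.uncurry fun (ξ : E) (r : ℝ) => (Ioi (c ξ)).indicator H r)
          = {p : E × ℝ | c p.1 < p.2}.indicator (fun p => H p.2) := by
        ext p
        by_cases h : c p.1 < p.2 <;>
          simp [Function.uncurry, Set.indicator, h, Set.mem_Ioi]
      rw [heq]
      exact ((hHmeas.comp measurable_snd).indicator
        (measurableSet_lt (hcmeas.comp measurable_fst) measurable_snd)).aemeasurable
    have hsw := lintegral_lintegral_swap hmeas2
    simp_rw [heq1]
    rw [hsw]
    congr 1
    ext r
    have : (fun ξ : E => (Ioi (c ξ)).indicator H r)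
        = {ξ : E | c ξ < r}.indicator (fun _ => H r) := by
      ext ξ
      by_cases h : c ξ < r <;>
        simp [Set.indicator, h, Set.mem_Ioi]
    rw [this, lintegral_indicator_const (measurableSet_lt hcmeas measurable_const)]
  -- Step 5: volume lower bound and conclusion
  haveI : Nontrivial E := Module.nontrivial_of_finrank_pos (R := ℝ) (M := E)
    (by show 0 < Module.finrank ℝ (EuclideanSpace ℝ (Fin n))
        rw [finrank_euclideanSpace_fin]; omega)
  set κ : ℝ≥0∞ := volume (Metric.ball (0:E) 1) with hκ_def
  have hκ0 : κ ≠ 0 := (Metric.measure_ball_pos volume 0 one_pos).ne'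
  set c2 : ℝ := 2 / Real.sqrt 2 ^ n with hc2_def
  have hc2pos : 0 < c2 := by positivity
  have hptwise : ∀ r ∈ Ioi (Real.sqrt 2),
      (ENNReal.ofReal c2 * κ) * F r ≤ H r * volume {ξ : E | c ξ < r} := by
    intro r hr
    rw [mem_Ioi] at hr
    have hr0 : 0 < r := lt_trans hsqrt2_pos hr
    have hr1 : 1 < r := lt_trans hsqrt2_gt1 hr
    have hr2 : 2 < r ^ 2 := by nlinarith
    have hball : Metric.ball (0:E) (r / Real.sqrt 2) ⊆ {ξ : E | c ξ < r} := by
      intro ξ hξ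
      rw [Metric.mem_ball, dist_zero_right] at hξ
      have hξ2 : ‖ξ‖ * Real.sqrt 2 < r := (lt_div_iff₀ hsqrt2_pos).mp hξ
      have hnn : (0:ℝ) ≤ ‖ξ‖ := norm_nonneg ξ
      have h0 : ‖ξ‖ * Real.sqrt 2 * (‖ξ‖ * Real.sqrt 2) < r * r :=
        mul_self_lt_mul_self (by positivity) hξ2
      have h1 : ‖ξ‖ ^ 2 * 2 < r ^ 2 := by nlinarith [h0, hsq_sqrt2]
      show Real.sqrt (1 + ‖ξ‖ ^ 2) < r
      rw [show r = Real.sqrt (r ^ 2) from (Real.sqrt_sq hr0.le).symm]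
      apply Real.sqrt_lt_sqrt (by positivity)
      nlinarith
    have hvol : ENNReal.ofReal ((r / Real.sqrt 2) ^ n) * κ ≤ volume {ξ : E | c ξ < r} := by
      have := Measure.addHaar_ball (volume : Measure E) (0:E)
        (by positivity : (0:ℝ) ≤ r / Real.sqrt 2)
      rw [finrank_euclideanSpace_fin] at this
      calc ENNReal.ofReal ((r / Real.sqrt 2) ^ n) * κ
          = volume (Metric.ball (0:E) (r / Real.sqrt 2)) := this.symm
        _ ≤ volume {ξ : E | c ξ < r} := measure_mono hball
    have hφr : 0 < φ r := hφpos r hr1.le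
    have hHF : H r * ENNReal.ofReal ((r / Real.sqrt 2) ^ n)
        = ENNReal.ofReal c2 * F r := by
      rw [hH_def, hF_def]
      simp only
      rw [← ENNReal.ofReal_mul (by positivity), ← ENNReal.ofReal_mul hc2pos.le]
      congr 1
      rw [hc2_def, div_pow]
      have hs2 : (0:ℝ) < Real.sqrt 2 ^ n := by positivity
      field_simp
    calc (ENNReal.ofReal c2 * κ) * F r
        = (ENNReal.ofReal c2 * F r) * κ := by ring
      _ = (H r * ENNReal.ofReal ((r / Real.sqrt 2) ^ n)) * κ := by rw [hHF]
      _ = H r * (ENNReal.ofReal ((r / Real.sqrt 2) ^ n) * κ) := by ring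
      _ ≤ H r * volume {ξ : E | c ξ < r} := mul_le_mul_right hvol _
  -- assemble
  have hchain : (ENNReal.ofReal c2 * κ) * ∫⁻ r in Ioi (Real.sqrt 2), F r
      ≤ ∫⁻ q : E × ℝ, f q := by
    rw [← lintegral_const_mul _ hFmeas]
    calc ∫⁻ r in Ioi (Real.sqrt 2), (ENNReal.ofReal c2 * κ) * F r
        ≤ ∫⁻ r in Ioi (Real.sqrt 2), H r * volume {ξ : E | c ξ < r} :=
          setLIntegral_mono' measurableSet_Ioi hptwise
      _ ≤ ∫⁻ r : ℝ, H r * volume {ξ : E | c ξ < r} := setLIntegral_le_lintegral _ _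
      _ = ∫⁻ ξ : E, ∫⁻ r in Ioi (c ξ), H r := hswap.symm
      _ ≤ ∫⁻ q : E × ℝ, f q := step1
  rw [htail] at hchain
  have hne : ENNReal.ofReal c2 * κ ≠ 0 := by
    apply mul_ne_zero _ hκ0
    simp only [ne_eq, ENNReal.ofReal_eq_zero, not_le]
    exact hc2pos
  rw [ENNReal.mul_top hne] at hchain
  exact top_le_iff.mp hchain
end
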